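/- Cevian area splitting (Eppstein's equalization step): let A, B, C ∈ ℝ² be affinely independent and T = convexHull ℝ {A, B, C}. For every real number t with 0 ≤ t ≤ (MeasureTheory.volume T).toReal there exists a point P on the closed segment [B, C] such that (MeasureTheory.volume (convexHull ℝ {A, B, P})).toReal = t. -/

import Mathlib

noncomputable section

open MeasureTheory Pointwise

/-- The Euclidean plane. -/
abbrev Plane : Type := EuclideanSpace ℝ (Fin 2)

/-- Scaling of triangle area along a cevian. -/
lemma cevian_tri_vol (A B C : Plane) (h : LinearIndependent ℝ ![B - A, C - A]) (s : ℝ) :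
    volume (convexHull ℝ {A, B, A + ((1-s)•(B-A) + s•(C-A))}) =
      ENNReal.ofReal |s| * volume (convexHull ℝ ({A, B, C} : Set Plane)) := by
  have hcard : Fintype.card (Fin 2) = Module.finrank ℝ Plane := by
    simp [finrank_euclideanSpace]
  set b : Module.Basis (Fin 2) ℝ Plane := basisOfLinearIndependentOfCardEqFinrank h hcard with hb
  have hcoe : ⇑b = ![B - A, C - A] := coe_basisOfLinearIndependentOfCardEqFinrank h hcard
  have hb0 : b 0 = B - A := by rw [hcoe]; rfl
  have hb1 : b 1 = C - A := by rw [hcoe]; rfl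
  set L : Plane →ₗ[ℝ] Plane := b.constr ℝ ![B - A, (1-s)•(B-A) + s•(C-A)] with hL
  have h0 : L (b 0) = b 0 := by rw [hL, Module.Basis.constr_basis, hb0]; rfl
  have h1 : L (b 1) = (1-s) • b 0 + s • b 1 := by
    rw [hL, Module.Basis.constr_basis, hb0, hb1]; rfl
  have hdet : LinearMap.det L = s := by
    rw [← LinearMap.det_toMatrix b]
    have hM : LinearMap.toMatrix b b L = !![1, 1-s; 0, s] := by
      ext i j
      rw [LinearMap.toMatrix_apply]
      fin_cases j
      · rw [show (⟨0, by norm_num⟩ : Fin 2) = 0 from rfl, h0]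
        fin_cases i <;> simp [Module.Basis.repr_self, Finsupp.single_apply]
      · rw [show (⟨1, by norm_num⟩ : Fin 2) = 1 from rfl, h1]
        fin_cases i <;>
          simp [map_add, _root_.map_smul, Module.Basis.repr_self, Finsupp.single_apply]
    rw [hM, Matrix.det_fin_two_of]; ring
  have hLB : L (B - A) = B - A := by rw [← hb0, h0, hb0]
  have hLC : L (C - A) = (1-s)•(B-A) + s•(C-A) := by rw [← hb1, h1, hb0, hb1]
  set f : Plane → Plane := fun x => A + L (x - A) with hf
  have himg : convexHull ℝ {A, B, A + ((1-s)•(B-A) + s•(C-A))} =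
      f '' convexHull ℝ ({A, B, C} : Set Plane) := by
    have haff : f = ⇑((AffineEquiv.constVAdd ℝ Plane A).toAffineMap.comp
        (L.toAffineMap.comp (AffineEquiv.constVAdd ℝ Plane (-A)).toAffineMap)) := by
      funext x
      simp [hf, AffineEquiv.constVAdd_apply, vadd_eq_add, neg_add_eq_sub]
    rw [haff, AffineMap.image_convexHull]
    congr 1
    rw [Set.image_insert_eq, Set.image_insert_eq, Set.image_singleton]
    congr 1 <;> [skip; congr 1] <;>
      simp [AffineEquiv.constVAdd_apply, vadd_eq_add, neg_add_eq_sub, hLB, hLC, map_zero]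
  rw [himg]
  have : f '' convexHull ℝ ({A, B, C} : Set Plane) =
      A +ᵥ (⇑L '' ((-A) +ᵥ convexHull ℝ ({A, B, C} : Set Plane))) := by
    rw [← Set.image_vadd, ← Set.image_vadd, Set.image_image, Set.image_image]
    simp [hf, vadd_eq_add, neg_add_eq_sub]
  rw [this, measure_vadd, Measure.addHaar_image_linearMap, measure_vadd, hdet]

/-- Cevian area splitting: for each value `t` between `0` and the area of triangle
`ABC`, there is a point `P` on segment `[B, C]` such that the triangle `ABP` has
area exactly `t`. -/
theorem cevian_area_splitting (A B C : Plane)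
    (hABC : AffineIndependent ℝ ![A, B, C])
    (T : Set Plane) (hT : T = convexHull ℝ {A, B, C})
    (t : ℝ) (ht0 : 0 ≤ t) (ht1 : t ≤ (volume T).toReal) :
    ∃ P ∈ segment ℝ B C,
      (volume (convexHull ℝ {A, B, P})).toReal = t := by
  have hli : LinearIndependent ℝ ![B - A, C - A] := by
    have h := (affineIndependent_iff_linearIndependent_vsub ℝ ![A,B,C] 0).mp hABC
    let e : Fin 2 → {x : Fin 3 // x ≠ 0} := ![⟨1, by decide⟩, ⟨2, by decide⟩]
    have he : Function.Injective e := by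
      intro i j hij; fin_cases i <;> fin_cases j <;> simp_all [e]
    have := h.comp e he
    convert this using 1
    funext j; fin_cases j <;> simp [e, vsub_eq_sub]
    rfl
  have hfin : volume (convexHull ℝ ({A, B, C} : Set Plane)) ≠ ⊤ :=
    (Set.Finite.isCompact_convexHull ℝ (Set.toFinite _)).measure_lt_top.ne
  set V : ℝ := (volume T).toReal with hV
  set s : ℝ := t / V with hs
  have hs0 : 0 ≤ s := div_nonneg ht0 ENNReal.toReal_nonneg
  have hsV : s * V = t := by
    rcases eq_or_ne V 0 with hV0 | hV0
    · have ht : t = 0 := le_antisymm (hV0 ▸ ht1) ht0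
      simp [hs, ht, hV0]
    · rw [hs]; field_simp
  have hs1 : s ≤ 1 := by
    rcases eq_or_ne V 0 with hV0 | hV0
    · have ht : t = 0 := le_antisymm (hV0 ▸ ht1) ht0
      simp [hs, ht]
    · rw [hs]
      exact div_le_one_of_le₀ ht1 ENNReal.toReal_nonneg
  refine ⟨A + ((1-s)•(B-A) + s•(C-A)), ⟨1 - s, s, by linarith, hs0, by ring, by module⟩, ?_⟩
  rw [cevian_tri_vol A B C hli s, abs_of_nonneg hs0, ENNReal.toReal_mul,
    ENNReal.toReal_ofReal hs0, ← hT, ← hV, hsV]
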